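/- Let V_λ be an irreducible G-representation with Φ(V_λ) ≠ 0. Then the composition 1 → Φ(V_λ)⊗Φ(V_λ*) → Φ(V_λ⊗V_λ*), where the first map is the rigidity morphism ĩ dual to ẽ and the second is J, is equal to Φ(i_λ), where i_λ : ℂ → V_λ⊗V_λ* is the canonical coevaluation map. -/

import Mathlib

/-!
Context: `C` is a ℂ-linear abelian semisimple rigid balanced braided tensor category with
simple unit object and finite-dimensional Hom-spaces.  `A` is a rigid `C`-algebra
(a commutative associative unital algebra object with `dim Hom(1,A) = 1`, self-dual via its
multiplication pairing) with trivial twist, and `G` is a compact group acting on `A` by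
algebra automorphisms with `A^G = 1`.  The functor `Φ : Rep G ⥤ C` is `V ↦ (V ⊠ A)^G`,
characterized by the natural isomorphism `Hom_C(L, Φ(V)) ≅ (V ⊗ Hom_C(L, A))^G`.
-/

open CategoryTheory MonoidalCategory Limits

noncomputable section

universe u

variable (C : Type u) [Category.{u} C] [Preadditive C] [CategoryTheory.Linear ℂ C]
  [MonoidalCategory C] [BraidedCategory C] [RigidCategory C] [HasFiniteBiproducts C]
  [MonoidalPreadditive C] [MonoidalLinear ℂ C]
  (G : Type) [Group G] [TopologicalSpace G] [IsTopologicalGroup G] [CompactSpace G]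

/-- The standing data: a semisimple balanced braided ℂ-linear category `C` with simple unit
and finite-dimensional Hom-spaces, a rigid commutative algebra object `A` with trivial twist
and `dim Hom(1,A) = 1`, and a compact group `G` acting on `A` by algebra automorphisms with
`A^G = 1`. -/
structure OrbifoldAlgebra where
  /-- `C` is semisimple: every object is a finite biproduct of simple objects. -/
  semisimple : ∀ X : C, ∃ (n : ℕ) (f : Fin n → C), (∀ i, Simple (f i)) ∧ Nonempty (X ≅ ⨁ f)
  /-- All Hom-spaces are finite-dimensional. -/
  homFinite : ∀ X Y : C, FiniteDimensional ℂ (X ⟶ Y)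
  /-- The unit object is simple. -/
  unitSimple : Simple (𝟙_ C)
  /-- Endomorphisms of the unit object are scalars. -/
  endScalar : ∀ f : 𝟙_ C ⟶ 𝟙_ C, ∃! c : ℂ, f = c • 𝟙 (𝟙_ C)
  /-- The balancing (twist) of `C`. -/
  θ : ∀ X : C, X ⟶ X
  θ_isIso : ∀ X : C, IsIso (θ X)
  θ_natural : ∀ {X Y : C} (f : X ⟶ Y), θ X ≫ f = f ≫ θ Y
  θ_tensor : ∀ X Y : C, θ (X ⊗ Y) = (θ X ⊗ₘ θ Y) ≫ (β_ X Y).hom ≫ (β_ Y X).hom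
  θ_unit : θ (𝟙_ C) = 𝟙 (𝟙_ C)
  /-- The `C`-algebra `A`: a commutative associative unital algebra object in `C`. -/
  A : CommMon C
  /-- The multiplicity of the unit object `1` in `A` is `1`. -/
  unit_multiplicity_one : Module.finrank ℂ (𝟙_ C ⟶ A.X) = 1
  /-- `A` has trivial twist. -/
  θ_A : θ A.X = 𝟙 A.X
  /-- Rigidity of `A` as a `C`-algebra: `A` is self-dual via its multiplication pairing.
  `ε` is the "counit" and `coev` the corresponding coevaluation. -/
  ε : A.X ⟶ 𝟙_ C
  coev : 𝟙_ C ⟶ A.X ⊗ A.X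
  pairing_coev_ev :
    A.X ◁ coev ≫ (α_ A.X A.X A.X).inv ≫ (A.mon.mul ≫ ε) ▷ A.X = (ρ_ A.X).hom ≫ (λ_ A.X).inv
  pairing_ev_coev :
    coev ▷ A.X ≫ (α_ A.X A.X A.X).hom ≫ A.X ◁ (A.mon.mul ≫ ε) = (λ_ A.X).hom ≫ (ρ_ A.X).inv
  /-- The action of `G` on `A` by automorphisms. -/
  π : G →* Aut A.X
  /-- Each `π g` preserves the multiplication of `A`. -/
  π_mul : ∀ g : G, A.mon.mul ≫ (π g).hom = ((π g).hom ⊗ₘ (π g).hom) ≫ A.mon.mul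
  /-- Each `π g` preserves the unit of `A`. -/
  π_one : ∀ g : G, A.mon.one ≫ (π g).hom = A.mon.one
  one_mono : Mono A.mon.one
  /-- `A^G = 1`: every `G`-invariant morphism `L ⟶ A` factors through the unit `1 ↪ A`. -/
  invariants_unit : ∀ {L : C} (f : L ⟶ A.X),
    (∀ g : G, f ≫ (π g).hom = f) → ∃ f' : L ⟶ 𝟙_ C, f = f' ≫ A.mon.one

namespace OrbifoldAlgebra

variable {C G}
variable (ctx : OrbifoldAlgebra C G)

/-- The action of `g : G` on the Hom-space `L ⟶ A` (postcomposition with `π g`). -/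
def actHom (L : C) (g : G) : (L ⟶ ctx.A.X) →ₗ[ℂ] (L ⟶ ctx.A.X) where
  toFun f := f ≫ (ctx.π g).hom
  map_add' f₁ f₂ := by simp [Preadditive.add_comp]
  map_smul' c f := by simp [CategoryTheory.Linear.smul_comp]

/-- Precomposition with `u : L' ⟶ L`, as a linear map on Hom-spaces into `A`. -/
def precompHom {L' L : C} (u : L' ⟶ L) : (L ⟶ ctx.A.X) →ₗ[ℂ] (L' ⟶ ctx.A.X) where
  toFun f := u ≫ f
  map_add' f₁ f₂ := by simp [Preadditive.comp_add]
  map_smul' c f := by simp [CategoryTheory.Linear.comp_smul]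

/-- The diagonal action of `g : G` on `V ⊗ Hom(L, A)`. -/
def diagAct (L : C) (V : FDRep ℂ G) (g : G) :
    TensorProduct ℂ V (L ⟶ ctx.A.X) →ₗ[ℂ] TensorProduct ℂ V (L ⟶ ctx.A.X) :=
  TensorProduct.map (V.ρ g) (ctx.actHom L g)

/-- The `G`-invariants `(V ⊗ Hom_C(L, A))^G`. -/
def invSub (L : C) (V : FDRep ℂ G) : Submodule ℂ (TensorProduct ℂ V (L ⟶ ctx.A.X)) where
  carrier := {x | ∀ g : G, ctx.diagAct L V g x = x}
  add_mem' := fun ha hb g => by rw [map_add, ha g, hb g]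
  zero_mem' := fun g => map_zero _
  smul_mem' := fun c x hx g => by rw [map_smul, hx g]

/-- The pairing `(L ⟶ A) ⊗ (M ⟶ A) → (L ⊗ M ⟶ A)` induced by the multiplication of `A`. -/
def homMulBil (L M : C) : (L ⟶ ctx.A.X) →ₗ[ℂ] (M ⟶ ctx.A.X) →ₗ[ℂ] ((L ⊗ M : C) ⟶ ctx.A.X) :=
  LinearMap.mk₂ ℂ (fun f h => (f ⊗ₘ h) ≫ ctx.A.mon.mul)
    (fun f f' h => by simp [MonoidalPreadditive.add_tensor, Preadditive.add_comp])
    (fun c f h => by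
      simp [MonoidalCategory.tensorHom_def, MonoidalLinear.smul_whiskerRight, CategoryTheory.Linear.smul_comp])
    (fun f h h' => by simp [MonoidalPreadditive.tensor_add, Preadditive.add_comp])
    (fun c f h => by
      simp [MonoidalCategory.tensorHom_def, MonoidalLinear.whiskerLeft_smul, CategoryTheory.Linear.comp_smul,
        CategoryTheory.Linear.smul_comp])

/-- The canonical map `(V ⊗ Hom(L,A)) ⊗ (W ⊗ Hom(M,A)) → (V ⊗ W) ⊗ Hom(L ⊗ M, A)`
combining the multiplication of `A` with the regrouping of tensor factors; it is used to
characterize the structure morphism `J`. -/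
def mulPair (L M : C) (V W : FDRep ℂ G) :
    TensorProduct ℂ (TensorProduct ℂ V (L ⟶ ctx.A.X)) (TensorProduct ℂ W (M ⟶ ctx.A.X)) →ₗ[ℂ]
      TensorProduct ℂ ((V ⊗ W : FDRep ℂ G) : Type) ((L ⊗ M : C) ⟶ ctx.A.X) :=
  (TensorProduct.map LinearMap.id (TensorProduct.lift (ctx.homMulBil L M))).comp
    (TensorProduct.tensorTensorTensorComm ℂ (V : Type) (L ⟶ ctx.A.X) (W : Type)
      (M ⟶ ctx.A.X)).toLinearMap

/-- The quantum ("categorical") dimension of an object of `C`, defined via the rigidity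
morphisms and the twist. -/
def dimMor (X : C) : 𝟙_ C ⟶ 𝟙_ C :=
  η_ X Xᘁ ≫ (ctx.θ X ▷ Xᘁ) ≫ (β_ X Xᘁ).hom ≫ ε_ X Xᘁ

/-- The quantum dimension as a complex number. -/
def dimc (X : C) : ℂ := (ctx.endScalar (ctx.dimMor X)).exists.choose

end OrbifoldAlgebra

/-- The standing data together with the functor `Φ : Rep G ⥤ C`, `Φ(V) = (V ⊠ A)^G`,
characterized by the natural isomorphism `Hom_C(L, Φ(V)) ≅ (V ⊗ Hom_C(L, A))^G`. -/
structure OrbifoldContext extends OrbifoldAlgebra C G where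
  /-- The functor `Φ : Rep G ⥤ C`, `V ↦ (V ⊠ A)^G`. -/
  Φ : FDRep ℂ G ⥤ C
  /-- The defining property of `Φ`: `Hom_C(L, Φ(V)) ≅ (V ⊗ Hom_C(L, A))^G`. -/
  homIso : ∀ (L : C) (V : FDRep ℂ G),
    (L ⟶ Φ.obj V) ≃ₗ[ℂ] toOrbifoldAlgebra.invSub L V
  /-- Naturality of `homIso` in the variable `L`. -/
  homIso_natural : ∀ {L' L : C} (u : L' ⟶ L) (V : FDRep ℂ G) (f : L ⟶ Φ.obj V),
    ((homIso L' V (u ≫ f)) : TensorProduct ℂ V (L' ⟶ toOrbifoldAlgebra.A.X))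
      = TensorProduct.map LinearMap.id (toOrbifoldAlgebra.precompHom u)
          ((homIso L V f) : TensorProduct ℂ V (L ⟶ toOrbifoldAlgebra.A.X))
  /-- Naturality of `homIso` in the variable `V`: this characterizes `Φ` on morphisms. -/
  homIso_map : ∀ (L : C) {V W : FDRep ℂ G} (φ : V ⟶ W) (f : L ⟶ Φ.obj V),
    ((homIso L W (f ≫ Φ.map φ)) : TensorProduct ℂ W (L ⟶ toOrbifoldAlgebra.A.X))
      = TensorProduct.map φ.hom.hom.hom LinearMap.id
          ((homIso L V f) : TensorProduct ℂ V (L ⟶ toOrbifoldAlgebra.A.X))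
  /-- The identification `Φ(ℂ) ≅ 1` (cf. Theorem `Φ(1) = 1`). -/
  Φunit : Φ.obj (𝟙_ (FDRep ℂ G)) ≅ 𝟙_ C
  /-- Characterization of `Φunit`: under `homIso` its inverse corresponds to
  `1 ⊗ (unit of A)`. -/
  Φunit_char : ((homIso (𝟙_ C) (𝟙_ (FDRep ℂ G)) Φunit.inv) :
      TensorProduct ℂ ((𝟙_ (FDRep ℂ G) : FDRep ℂ G) : Type)
        ((𝟙_ C : C) ⟶ toOrbifoldAlgebra.A.X))
      = (1 : ℂ) ⊗ₜ[ℂ] toOrbifoldAlgebra.A.mon.one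
  /-- The structure morphism `J : Φ(V) ⊗ Φ(W) ⟶ Φ(V ⊗ W)`, defined as the composition
  `(V ⊠ A)^G ⊗ (W ⊠ A)^G ↪ ((V ⊗ W) ⊠ (A ⊗ A))^G → ((V ⊗ W) ⊠ A)^G` (the second map induced
  by the multiplication `μ` of `A`). -/
  J : ∀ V W : FDRep ℂ G, Φ.obj V ⊗ Φ.obj W ⟶ Φ.obj (V ⊗ W)
  /-- The defining property of `J`: under `homIso`, it is induced by the map
  `(V ⊗ Hom(L,A)) ⊗ (W ⊗ Hom(M,A)) → (V ⊗ W) ⊗ Hom(L ⊗ M, A)`,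
  `(v ⊗ f) ⊗ (w ⊗ h) ↦ (v ⊗ w) ⊗ ((f ⊗ h) ≫ μ)`. -/
  J_char : ∀ {L M : C} {V W : FDRep ℂ G} (f : L ⟶ Φ.obj V) (h : M ⟶ Φ.obj W),
    ((homIso (L ⊗ M) (V ⊗ W) ((f ⊗ₘ h) ≫ J V W)) :
        TensorProduct ℂ ((V ⊗ W : FDRep ℂ G) : Type)
          ((L ⊗ M : C) ⟶ toOrbifoldAlgebra.A.X))
      = toOrbifoldAlgebra.mulPair L M V W
          (((homIso L V f) : TensorProduct ℂ (V : Type) (L ⟶ toOrbifoldAlgebra.A.X)) ⊗ₜ[ℂ]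
            ((homIso M W h) : TensorProduct ℂ (W : Type) (M ⟶ toOrbifoldAlgebra.A.X)))
  /-- `J` is compatible with the unit isomorphisms (left). -/
  J_unit_left : ∀ V : FDRep ℂ G,
    (Φunit.inv ▷ Φ.obj V) ≫ J (𝟙_ (FDRep ℂ G)) V ≫ Φ.map (λ_ V).hom = (λ_ (Φ.obj V)).hom
  /-- `J` is compatible with the unit isomorphisms (right). -/
  J_unit_right : ∀ V : FDRep ℂ G,
    (Φ.obj V ◁ Φunit.inv) ≫ J V (𝟙_ (FDRep ℂ G)) ≫ Φ.map (ρ_ V).hom = (ρ_ (Φ.obj V)).hom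

namespace OrbifoldContext

variable {C G}
variable (ctx : OrbifoldContext C G)

/-- The morphism `ẽ : Φ(V*) ⊗ Φ(V) ⟶ 1`, the composition
`Φ(V*) ⊗ Φ(V) → Φ(V* ⊗ V) → Φ(ℂ) = 1` of `J` with `Φ` applied to the evaluation. -/
def etilde (V : FDRep ℂ G) : ctx.Φ.obj Vᘁ ⊗ ctx.Φ.obj V ⟶ 𝟙_ C :=
  ctx.J Vᘁ V ≫ ctx.Φ.map (ε_ V Vᘁ) ≫ ctx.Φunit.hom

end OrbifoldContext


/-! ### Auxiliary lemmas -/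

section Aux

set_option linter.unusedSectionVars false
set_option maxHeartbeats 1000000

variable {C G}

namespace OrbifoldAlgebra

variable (OA : OrbifoldAlgebra C G)

lemma FDRep_tensorHom_tmul {V W V' W' : FDRep ℂ G} (φ : V ⟶ V') (ψ : W ⟶ W')
    (v : V) (w : W) :
    ((φ ⊗ₘ ψ).hom (v ⊗ₜ[ℂ] w) : ((V' ⊗ W' : FDRep ℂ G) : Type)) = φ.hom.hom.hom v ⊗ₜ[ℂ] ψ.hom.hom.hom w := rfl

lemma FDRep_associator_inv_tmul {U V W : FDRep ℂ G} (u : U) (v : V) (w : W) :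
    ((α_ U V W).inv.hom (u ⊗ₜ[ℂ] (v ⊗ₜ[ℂ] w)) : (((U ⊗ V) ⊗ W : FDRep ℂ G) : Type))
      = (u ⊗ₜ[ℂ] v) ⊗ₜ[ℂ] w := rfl

lemma mulPair_tmul {L M : C} {V W : FDRep ℂ G} (v : V) (f : L ⟶ OA.A.X)
    (w : W) (h : M ⟶ OA.A.X) :
    OA.mulPair L M V W ((v ⊗ₜ[ℂ] f) ⊗ₜ[ℂ] (w ⊗ₜ[ℂ] h))
      = (v ⊗ₜ[ℂ] w) ⊗ₜ[ℂ] ((f ⊗ₘ h) ≫ OA.A.mon.mul) := by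
  rfl

lemma mul_comp_assoc {L M N : C} (f : L ⟶ OA.A.X) (h : M ⟶ OA.A.X) (k : N ⟶ OA.A.X) :
    (((f ⊗ₘ h) ≫ OA.A.mon.mul) ⊗ₘ k) ≫ OA.A.mon.mul
      = (α_ L M N).hom ≫ (f ⊗ₘ ((h ⊗ₘ k) ≫ OA.A.mon.mul)) ≫ OA.A.mon.mul := by
  rw [show ((f ⊗ₘ h) ≫ OA.A.mon.mul) ⊗ₘ k = ((f ⊗ₘ h) ⊗ₘ k) ≫ (OA.A.mon.mul ▷ OA.A.X) by
        rw [← tensorHom_id, tensorHom_comp_tensorHom, Category.comp_id]]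
  rw [Category.assoc, MonObj.mul_assoc, associator_naturality_assoc]
  rw [← id_tensorHom, tensorHom_comp_tensorHom_assoc, Category.comp_id]

lemma mulPair_map {L M : C} {V W V' W' : FDRep ℂ G} (φ : V ⟶ V') (ψ : W ⟶ W')
    (a : TensorProduct ℂ V (L ⟶ OA.A.X)) (b : TensorProduct ℂ W (M ⟶ OA.A.X)) :
    OA.mulPair L M V' W'
        ((TensorProduct.map φ.hom.hom.hom LinearMap.id a) ⊗ₜ[ℂ] (TensorProduct.map ψ.hom.hom.hom LinearMap.id b))
      = TensorProduct.map (φ ⊗ₘ ψ).hom.hom.hom LinearMap.id (OA.mulPair L M V W (a ⊗ₜ[ℂ] b)) := by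
  induction a using TensorProduct.induction_on with
  | zero => simp [TensorProduct.zero_tmul]
  | tmul v f =>
    induction b using TensorProduct.induction_on with
    | zero => simp [TensorProduct.tmul_zero]
    | tmul w h =>
      rw [TensorProduct.map_tmul, TensorProduct.map_tmul, mulPair_tmul, mulPair_tmul,
        TensorProduct.map_tmul]
      rfl
    | add b₁ b₂ ih₁ ih₂ => simp only [map_add, TensorProduct.tmul_add, ih₁, ih₂]
  | add a₁ a₂ ih₁ ih₂ => simp only [map_add, TensorProduct.add_tmul, ih₁, ih₂]

lemma mulPair_assoc {L M N : C} {V W U : FDRep ℂ G}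
    (a : TensorProduct ℂ V (L ⟶ OA.A.X)) (b : TensorProduct ℂ W (M ⟶ OA.A.X))
    (c : TensorProduct ℂ U (N ⟶ OA.A.X)) :
    OA.mulPair (L ⊗ M) N (V ⊗ W) U ((OA.mulPair L M V W (a ⊗ₜ[ℂ] b)) ⊗ₜ[ℂ] c)
      = TensorProduct.map LinearMap.id (OA.precompHom (α_ L M N).hom)
          (TensorProduct.map (α_ V W U).inv.hom.hom.hom LinearMap.id
            (OA.mulPair L (M ⊗ N) V (W ⊗ U)
              (a ⊗ₜ[ℂ] (OA.mulPair M N W U (b ⊗ₜ[ℂ] c))))) := by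
  induction a using TensorProduct.induction_on with
  | zero => simp [TensorProduct.zero_tmul]
  | tmul v f =>
    induction b using TensorProduct.induction_on with
    | zero => simp [TensorProduct.zero_tmul, TensorProduct.tmul_zero]
    | tmul w h =>
      induction c using TensorProduct.induction_on with
      | zero => simp [TensorProduct.tmul_zero]
      | tmul u k =>
        rw [mulPair_tmul, mulPair_tmul, mulPair_tmul, mulPair_tmul,
          TensorProduct.map_tmul, TensorProduct.map_tmul, mul_comp_assoc]
        rfl
      | add c₁ c₂ ih₁ ih₂ => simp only [map_add, TensorProduct.tmul_add, ih₁, ih₂]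
    | add b₁ b₂ ih₁ ih₂ =>
      simp only [map_add, TensorProduct.tmul_add, TensorProduct.add_tmul, ih₁, ih₂]
  | add a₁ a₂ ih₁ ih₂ =>
    simp only [map_add, TensorProduct.add_tmul, TensorProduct.tmul_add, ih₁, ih₂]

end OrbifoldAlgebra

namespace OrbifoldContext

variable (ctx : OrbifoldContext C G)

lemma hom_ext {L : C} {V : FDRep ℂ G} {f g : L ⟶ ctx.Φ.obj V}
    (h : ((ctx.homIso L V f) : TensorProduct ℂ V (L ⟶ ctx.A.X))
       = ((ctx.homIso L V g) : TensorProduct ℂ V (L ⟶ ctx.A.X))) : f = g :=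
  (ctx.homIso L V).injective (Subtype.ext h)

lemma homIso_J (V W : FDRep ℂ G) :
    ((ctx.homIso (ctx.Φ.obj V ⊗ ctx.Φ.obj W) (V ⊗ W) (ctx.J V W)) :
        TensorProduct ℂ ((V ⊗ W : FDRep ℂ G) : Type)
          ((ctx.Φ.obj V ⊗ ctx.Φ.obj W : C) ⟶ ctx.A.X))
      = ctx.mulPair (ctx.Φ.obj V) (ctx.Φ.obj W) V W
          (((ctx.homIso (ctx.Φ.obj V) V (𝟙 (ctx.Φ.obj V))) :
              TensorProduct ℂ (V : Type) (ctx.Φ.obj V ⟶ ctx.A.X)) ⊗ₜ[ℂ]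
            ((ctx.homIso (ctx.Φ.obj W) W (𝟙 (ctx.Φ.obj W))) :
              TensorProduct ℂ (W : Type) (ctx.Φ.obj W ⟶ ctx.A.X))) := by
  have h := ctx.J_char (𝟙 (ctx.Φ.obj V)) (𝟙 (ctx.Φ.obj W))
  rw [id_tensorHom_id, Category.id_comp] at h
  exact h

lemma homIso_Φmap {V W : FDRep ℂ G} (φ : V ⟶ W) :
    ((ctx.homIso (ctx.Φ.obj V) W (ctx.Φ.map φ)) :
        TensorProduct ℂ (W : Type) (ctx.Φ.obj V ⟶ ctx.A.X))
      = TensorProduct.map φ.hom.hom.hom LinearMap.id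
          ((ctx.homIso (ctx.Φ.obj V) V (𝟙 (ctx.Φ.obj V))) :
            TensorProduct ℂ (V : Type) (ctx.Φ.obj V ⟶ ctx.A.X)) := by
  have h := ctx.homIso_map (ctx.Φ.obj V) φ (𝟙 (ctx.Φ.obj V))
  rw [Category.id_comp] at h
  exact h

lemma J_nat {V V' W W' : FDRep ℂ G} (φ : V ⟶ V') (ψ : W ⟶ W') :
    (ctx.Φ.map φ ⊗ₘ ctx.Φ.map ψ) ≫ ctx.J V' W' = ctx.J V W ≫ ctx.Φ.map (φ ⊗ₘ ψ) := by
  apply ctx.hom_ext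
  rw [ctx.J_char (ctx.Φ.map φ) (ctx.Φ.map ψ)]
  rw [ctx.homIso_map _ (φ ⊗ₘ ψ) (ctx.J V W)]
  rw [ctx.homIso_Φmap φ, ctx.homIso_Φmap ψ, ctx.homIso_J V W]
  exact ctx.toOrbifoldAlgebra.mulPair_map φ ψ _ _

lemma J_assoc (V W U : FDRep ℂ G) :
    (ctx.J V W ▷ ctx.Φ.obj U) ≫ ctx.J (V ⊗ W) U
      = (α_ (ctx.Φ.obj V) (ctx.Φ.obj W) (ctx.Φ.obj U)).hom ≫ (ctx.Φ.obj V ◁ ctx.J W U) ≫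
          ctx.J V (W ⊗ U) ≫ ctx.Φ.map (α_ V W U).inv := by
  apply ctx.hom_ext
  have lhs : (ctx.J V W ▷ ctx.Φ.obj U) ≫ ctx.J (V ⊗ W) U
      = (ctx.J V W ⊗ₘ 𝟙 (ctx.Φ.obj U)) ≫ ctx.J (V ⊗ W) U := by rw [tensorHom_id]
  have rhs : (α_ (ctx.Φ.obj V) (ctx.Φ.obj W) (ctx.Φ.obj U)).hom ≫ (ctx.Φ.obj V ◁ ctx.J W U) ≫
        ctx.J V (W ⊗ U) ≫ ctx.Φ.map (α_ V W U).inv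
      = (α_ (ctx.Φ.obj V) (ctx.Φ.obj W) (ctx.Φ.obj U)).hom ≫
          (((𝟙 (ctx.Φ.obj V) ⊗ₘ ctx.J W U) ≫ ctx.J V (W ⊗ U)) ≫ ctx.Φ.map (α_ V W U).inv) := by
    rw [id_tensorHom]; simp only [Category.assoc]
  rw [lhs, rhs]
  rw [ctx.J_char (ctx.J V W) (𝟙 (ctx.Φ.obj U))]
  rw [ctx.homIso_natural (α_ (ctx.Φ.obj V) (ctx.Φ.obj W) (ctx.Φ.obj U)).hom]
  rw [ctx.homIso_map _ (α_ V W U).inv]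
  rw [ctx.J_char (𝟙 (ctx.Φ.obj V)) (ctx.J W U)]
  rw [ctx.homIso_J V W, ctx.homIso_J W U]
  exact ctx.toOrbifoldAlgebra.mulPair_assoc _ _ _

end OrbifoldContext

end Aux


set_option maxHeartbeats 4000000

/-- for an irreducible `V_λ` with `Φ(V_λ) ≠ 0`, the composition
`1 → Φ(V_λ) ⊗ Φ(V_λ*) → Φ(V_λ ⊗ V_λ*)` (rigidity morphism `itld` dual to `ẽ`, followed by `J`)
equals `Φ(i_λ)` where `i_λ : ℂ → V_λ ⊗ V_λ*` is the canonical coevaluation. -/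
theorem itilde_J_eq_phi_coevaluation (ctx : OrbifoldContext C G) (V : FDRep ℂ G)
    (hV : Simple V) (hnz : ¬IsZero (ctx.Φ.obj V))
    (itld : 𝟙_ C ⟶ ctx.Φ.obj V ⊗ ctx.Φ.obj Vᘁ)
    (zig₁ : ctx.Φ.obj Vᘁ ◁ itld ≫ (α_ (ctx.Φ.obj Vᘁ) (ctx.Φ.obj V) (ctx.Φ.obj Vᘁ)).inv ≫
        ctx.etilde V ▷ ctx.Φ.obj Vᘁ
      = (ρ_ (ctx.Φ.obj Vᘁ)).hom ≫ (λ_ (ctx.Φ.obj Vᘁ)).inv)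
    (zig₂ : itld ▷ ctx.Φ.obj V ≫ (α_ (ctx.Φ.obj V) (ctx.Φ.obj Vᘁ) (ctx.Φ.obj V)).hom ≫
        ctx.Φ.obj V ◁ ctx.etilde V
      = (λ_ (ctx.Φ.obj V)).hom ≫ (ρ_ (ctx.Φ.obj V)).inv) :
    itld ≫ ctx.J V Vᘁ = ctx.Φunit.inv ≫ ctx.Φ.map (η_ V Vᘁ) := by
  classical
  haveI := hV
  -- Part 1: `A.one` spans `Hom(𝟙, A)`
  have hone_ne : (ctx.A.mon.one : 𝟙_ C ⟶ ctx.A.X) ≠ 0 := by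
    intro h0
    have hmono := ctx.one_mono
    rw [h0] at hmono
    have hid : (𝟙 (𝟙_ C) : 𝟙_ C ⟶ 𝟙_ C) = 0 := by
      have h := (cancel_mono (0 : 𝟙_ C ⟶ ctx.A.X)).mp
        (by simp : (𝟙 (𝟙_ C)) ≫ (0 : 𝟙_ C ⟶ ctx.A.X) = (0 : 𝟙_ C ⟶ 𝟙_ C) ≫ 0)
      simpa using h
    obtain ⟨c, hc, hcu⟩ := ctx.endScalar (𝟙 (𝟙_ C))
    have h1 : (1 : ℂ) = c := hcu 1 (by simp)
    have h0' : (0 : ℂ) = c := hcu 0 (by simp [hid])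
    exact one_ne_zero (h1.trans h0'.symm)
  haveI hFD : FiniteDimensional ℂ (𝟙_ C ⟶ ctx.A.X) := ctx.homFinite _ _
  have hspan : ∀ f : 𝟙_ C ⟶ ctx.A.X, ∃ c : ℂ, c • ctx.A.mon.one = f :=
    (finrank_eq_one_iff_of_nonzero' ctx.A.mon.one hone_ne).mp ctx.unit_multiplicity_one
  obtain ⟨e, he⟩ : ∃ e : (𝟙_ C ⟶ ctx.A.X) →ₗ[ℂ] ℂ, e ctx.A.mon.one = 1 := by
    have hbij : Function.Bijective (LinearMap.toSpanSingleton ℂ (𝟙_ C ⟶ ctx.A.X) ctx.A.mon.one) := by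
      constructor
      · intro a b hab
        exact smul_left_injective ℂ hone_ne
          (by simpa [LinearMap.toSpanSingleton_apply] using hab)
      · intro f
        obtain ⟨c, hc⟩ := hspan f
        exact ⟨c, by simpa [LinearMap.toSpanSingleton_apply] using hc⟩
    refine ⟨(LinearEquiv.ofBijective _ hbij).symm.toLinearMap, ?_⟩
    have h1 : (LinearEquiv.ofBijective _ hbij) (1 : ℂ) = ctx.A.mon.one := by
      simp [LinearEquiv.ofBijective_apply, LinearMap.toSpanSingleton_apply]
    show (LinearEquiv.ofBijective _ hbij).symm ctx.A.mon.one = 1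
    rw [LinearEquiv.symm_apply_eq]
    exact h1.symm
  have tmul_one_inj : ∀ (W' : FDRep ℂ G) (y y' : W'),
      (y ⊗ₜ[ℂ] ctx.A.mon.one : TensorProduct ℂ W' (𝟙_ C ⟶ ctx.A.X)) = y' ⊗ₜ[ℂ] ctx.A.mon.one →
        y = y' := by
    intro W' y y' hyy
    have h := congrArg (((TensorProduct.rid ℂ (W' : Type)).toLinearMap.comp
      (TensorProduct.map LinearMap.id e)) : TensorProduct ℂ W' (𝟙_ C ⟶ ctx.A.X) →ₗ[ℂ] W') hyy
    simpa [TensorProduct.map_tmul, TensorProduct.rid_tmul, he] using h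
  have decomp : ∀ (W' : FDRep ℂ G) (x : TensorProduct ℂ W' (𝟙_ C ⟶ ctx.A.X)),
      ∃ y : W', x = y ⊗ₜ[ℂ] ctx.A.mon.one := by
    intro W' x
    induction x using TensorProduct.induction_on with
    | zero => exact ⟨0, (TensorProduct.zero_tmul _ _).symm⟩
    | tmul w f =>
      obtain ⟨c, hc⟩ := hspan f
      exact ⟨c • w, by rw [← hc, TensorProduct.smul_tmul]⟩
    | add x₁ x₂ ih₁ ih₂ =>
      obtain ⟨z₁, h₁⟩ := ih₁; obtain ⟨z₂, h₂⟩ := ih₂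
      exact ⟨z₁ + z₂, by rw [h₁, h₂, TensorProduct.add_tmul]⟩
  -- Part 2: both sides lie in a 1-dimensional space of invariants
  set y₂ : ((V ⊗ Vᘁ : FDRep ℂ G) : Type) := (η_ V Vᘁ).hom (1 : ℂ) with hy₂def
  have hx₂ : ((ctx.homIso (𝟙_ C) (V ⊗ Vᘁ) (ctx.Φunit.inv ≫ ctx.Φ.map (η_ V Vᘁ))) :
        TensorProduct ℂ ((V ⊗ Vᘁ : FDRep ℂ G) : Type) (𝟙_ C ⟶ ctx.A.X))
      = y₂ ⊗ₜ[ℂ] ctx.A.mon.one := by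
    rw [ctx.homIso_map (𝟙_ C) (η_ V Vᘁ) ctx.Φunit.inv, ctx.Φunit_char,
      TensorProduct.map_tmul, hy₂def]
    rfl
  have hinv : ∀ (x : ctx.invSub (𝟙_ C) (V ⊗ Vᘁ)) (y : ((V ⊗ Vᘁ : FDRep ℂ G) : Type)),
      (x : TensorProduct ℂ ((V ⊗ Vᘁ : FDRep ℂ G) : Type) (𝟙_ C ⟶ ctx.A.X))
          = y ⊗ₜ[ℂ] ctx.A.mon.one →
        ∀ g : G, (V ⊗ Vᘁ : FDRep ℂ G).ρ g y = y := by
    intro x y hxy g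
    have hx : ctx.diagAct (𝟙_ C) (V ⊗ Vᘁ) g
        (x : TensorProduct ℂ ((V ⊗ Vᘁ : FDRep ℂ G) : Type) (𝟙_ C ⟶ ctx.A.X)) = x := x.2 g
    rw [hxy] at hx
    refine tmul_one_inj (V ⊗ Vᘁ) _ _ ?_
    rw [← hx]
    rw [OrbifoldAlgebra.diagAct, TensorProduct.map_tmul]
    exact congrArg (((V ⊗ Vᘁ : FDRep ℂ G).ρ g y) ⊗ₜ[ℂ] ·) (ctx.π_one g).symm
  obtain ⟨y₁, hy₁⟩ := decomp (V ⊗ Vᘁ)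
    ((ctx.homIso (𝟙_ C) (V ⊗ Vᘁ) (itld ≫ ctx.J V Vᘁ)) :
      TensorProduct ℂ ((V ⊗ Vᘁ : FDRep ℂ G) : Type) (𝟙_ C ⟶ ctx.A.X))
  have hy₁inv : ∀ g : G, (V ⊗ Vᘁ : FDRep ℂ G).ρ g y₁ = y₁ := hinv _ y₁ hy₁
  have hy₂inv : ∀ g : G, (V ⊗ Vᘁ : FDRep ℂ G).ρ g y₂ = y₂ := hinv _ y₂ hx₂
  -- Schur's lemma: the hom-space from the unit is at most 1-dimensional
  have hdim : Module.finrank ℂ ((𝟙_ (FDRep ℂ G)) ⟶ (V ⊗ Vᘁ : FDRep ℂ G)) ≤ 1 := by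
    let E : ((𝟙_ (FDRep ℂ G)) ⟶ (V ⊗ Vᘁ : FDRep ℂ G)) →ₗ[ℂ] ((V : FDRep ℂ G) ⟶ V) :=
      { toFun := fun h => (λ_ V).inv ≫
          (h ▷ V ≫ (α_ V Vᘁ V).hom ≫ V ◁ ε_ V Vᘁ ≫ (ρ_ V).hom)
        map_add' := fun h h' => by
          simp [Preadditive.add_comp, Preadditive.comp_add]
        map_smul' := fun cc h => by
          simp }
    have hEeq : ∀ h, E h = (λ_ V).inv ≫ (tensorRightHomEquiv (𝟙_ (FDRep ℂ G)) V Vᘁ V).symm h :=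
      fun h => rfl
    have hE : Function.Injective E := by
      intro h h' hh
      apply (tensorRightHomEquiv (𝟙_ (FDRep ℂ G)) V Vᘁ V).symm.injective
      rwa [hEeq h, hEeq h', cancel_epi] at hh
    calc Module.finrank ℂ ((𝟙_ (FDRep ℂ G)) ⟶ (V ⊗ Vᘁ : FDRep ℂ G))
        ≤ Module.finrank ℂ ((V : FDRep ℂ G) ⟶ V) := LinearMap.finrank_le_finrank_of_injective hE
      _ = 1 := finrank_endomorphism_simple_eq_one ℂ V
  -- the invariants, as morphisms from the unit object
  let h₁ : (𝟙_ (FDRep ℂ G)) ⟶ (V ⊗ Vᘁ : FDRep ℂ G) :=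
    { hom := FGModuleCat.ofHom (LinearMap.toSpanSingleton ℂ _ y₁)
      comm := fun g => by
        apply FGModuleCat.hom_ext; apply LinearMap.ext; intro (c : ℂ)
        show LinearMap.toSpanSingleton ℂ _ y₁ c
          = (V ⊗ Vᘁ : FDRep ℂ G).ρ g (LinearMap.toSpanSingleton ℂ _ y₁ c)
        rw [LinearMap.toSpanSingleton_apply, map_smul, hy₁inv g] }
  let h₂ : (𝟙_ (FDRep ℂ G)) ⟶ (V ⊗ Vᘁ : FDRep ℂ G) :=
    { hom := FGModuleCat.ofHom (LinearMap.toSpanSingleton ℂ _ y₂)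
      comm := fun g => by
        apply FGModuleCat.hom_ext; apply LinearMap.ext; intro (c : ℂ)
        show LinearMap.toSpanSingleton ℂ _ y₂ c
          = (V ⊗ Vᘁ : FDRep ℂ G).ρ g (LinearMap.toSpanSingleton ℂ _ y₂ c)
        rw [LinearMap.toSpanSingleton_apply, map_smul, hy₂inv g] }
  have hy₂ne : y₂ ≠ 0 := by
    intro h0
    rw [hy₂def] at h0
    have hη : (η_ V Vᘁ : (𝟙_ (FDRep ℂ G)) ⟶ V ⊗ Vᘁ) = 0 := by
      ext1
      apply FGModuleCat.hom_ext
      apply LinearMap.ext_ring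
      exact h0
    have hz := ExactPairing.evaluation_coevaluation V Vᘁ
    rw [hη] at hz
    simp only [MonoidalPreadditive.zero_whiskerRight, Limits.zero_comp] at hz
    have hid0 : 𝟙 V = 0 := by
      calc 𝟙 V = (λ_ V).inv ≫ ((λ_ V).hom ≫ (ρ_ V).inv) ≫ (ρ_ V).hom := by simp
        _ = (λ_ V).inv ≫ (0 : (𝟙_ (FDRep ℂ G)) ⊗ V ⟶ V ⊗ 𝟙_ (FDRep ℂ G)) ≫ (ρ_ V).hom := by
            rw [← hz]
        _ = 0 := by simp
    exact id_nonzero V hid0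
  have hh₂ne : h₂ ≠ 0 := by
    intro h0
    apply hy₂ne
    have h1 : h₂.hom (1 : ℂ) = y₂ := one_smul ℂ y₂
    rw [h0] at h1
    exact h1.symm.trans rfl
  obtain ⟨v, hv⟩ := finrank_le_one_iff.mp hdim
  obtain ⟨c₁, hc₁⟩ := hv h₁
  obtain ⟨c₂, hc₂⟩ := hv h₂
  have hc₂ne : c₂ ≠ 0 := fun h0 => hh₂ne (by rw [← hc₂, h0, zero_smul])
  have hcomb : h₁ = (c₁ * c₂⁻¹) • h₂ := by
    rw [← hc₁, ← hc₂, smul_smul]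
    congr 1
    field_simp
  have hy : y₁ = (c₁ * c₂⁻¹) • y₂ := by
    have e1 : h₁.hom (1 : ℂ) = y₁ := one_smul ℂ y₁
    have e2 : h₂.hom (1 : ℂ) = y₂ := one_smul ℂ y₂
    rw [hcomb, Action.smul_hom] at e1
    rw [← e1, ← e2]
    rfl
  have hi : itld ≫ ctx.J V Vᘁ
      = (c₁ * c₂⁻¹) • (ctx.Φunit.inv ≫ ctx.Φ.map (η_ V Vᘁ)) := by
    apply (ctx.homIso (𝟙_ C) (V ⊗ Vᘁ)).injective
    apply Subtype.ext
    rw [map_smul]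
    calc ((ctx.homIso (𝟙_ C) (V ⊗ Vᘁ) (itld ≫ ctx.J V Vᘁ)) :
          TensorProduct ℂ ((V ⊗ Vᘁ : FDRep ℂ G) : Type) (𝟙_ C ⟶ ctx.A.X))
        = y₁ ⊗ₜ[ℂ] ctx.A.mon.one := hy₁
      _ = ((c₁ * c₂⁻¹) • y₂) ⊗ₜ[ℂ] ctx.A.mon.one := by rw [hy]
      _ = (c₁ * c₂⁻¹) • (y₂ ⊗ₜ[ℂ] ctx.A.mon.one) := by rw [TensorProduct.smul_tmul']
      _ = (c₁ * c₂⁻¹) • ((ctx.homIso (𝟙_ C) (V ⊗ Vᘁ)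
            (ctx.Φunit.inv ≫ ctx.Φ.map (η_ V Vᘁ))) :
            TensorProduct ℂ ((V ⊗ Vᘁ : FDRep ℂ G) : Type) (𝟙_ C ⟶ ctx.A.X)) := by rw [hx₂]
      _ = (((c₁ * c₂⁻¹) • ctx.homIso (𝟙_ C) (V ⊗ Vᘁ)
            (ctx.Φunit.inv ≫ ctx.Φ.map (η_ V Vᘁ)) : ctx.invSub (𝟙_ C) (V ⊗ Vᘁ)) :
            TensorProduct ℂ ((V ⊗ Vᘁ : FDRep ℂ G) : Type) (𝟙_ C ⟶ ctx.A.X)) := rfl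
  -- Part 3: the scalar is 1
  have hzig : ((η_ V Vᘁ) ⊗ₘ 𝟙 V) ≫ (α_ V Vᘁ V).hom ≫ (V ◁ ε_ V Vᘁ) ≫ (ρ_ V).hom
      = (λ_ V).hom := by
    rw [tensorHom_id]
    have hz := ExactPairing.evaluation_coevaluation V Vᘁ
    calc (η_ V Vᘁ) ▷ V ≫ (α_ V Vᘁ V).hom ≫ (V ◁ ε_ V Vᘁ) ≫ (ρ_ V).hom
        = ((η_ V Vᘁ) ▷ V ≫ (α_ V Vᘁ V).hom ≫ (V ◁ ε_ V Vᘁ)) ≫ (ρ_ V).hom := by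
          simp only [Category.assoc]
      _ = ((λ_ V).hom ≫ (ρ_ V).inv) ≫ (ρ_ V).hom := by rw [hz]
      _ = (λ_ V).hom := by simp
  have hG2 : (λ_ (ctx.Φ.obj V)).inv ≫
        ((ctx.Φunit.inv ≫ ctx.Φ.map (η_ V Vᘁ)) ▷ ctx.Φ.obj V) ≫ ctx.J (V ⊗ Vᘁ) V ≫
          ctx.Φ.map ((α_ V Vᘁ V).hom ≫ (V ◁ ε_ V Vᘁ) ≫ (ρ_ V).hom) = 𝟙 (ctx.Φ.obj V) := by
    rw [comp_whiskerRight]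
    have hn : ((ctx.Φ.map (η_ V Vᘁ)) ▷ ctx.Φ.obj V) ≫ ctx.J (V ⊗ Vᘁ) V
        = ctx.J (𝟙_ (FDRep ℂ G)) V ≫ ctx.Φ.map ((η_ V Vᘁ) ⊗ₘ 𝟙 V) := by
      have hnat := ctx.J_nat (η_ V Vᘁ) (𝟙 V)
      rw [CategoryTheory.Functor.map_id] at hnat
      rw [← hnat, tensorHom_id]
    have hP : ctx.Φ.map ((η_ V Vᘁ) ⊗ₘ 𝟙 V) ≫
          ctx.Φ.map ((α_ V Vᘁ V).hom ≫ (V ◁ ε_ V Vᘁ) ≫ (ρ_ V).hom)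
        = ctx.Φ.map (λ_ V).hom := by
      rw [← ctx.Φ.map_comp, hzig]
    calc (λ_ (ctx.Φ.obj V)).inv ≫
          ((ctx.Φunit.inv ▷ ctx.Φ.obj V) ≫ (ctx.Φ.map (η_ V Vᘁ)) ▷ ctx.Φ.obj V) ≫
            ctx.J (V ⊗ Vᘁ) V ≫ ctx.Φ.map ((α_ V Vᘁ V).hom ≫ (V ◁ ε_ V Vᘁ) ≫ (ρ_ V).hom)
        = (λ_ (ctx.Φ.obj V)).inv ≫ (ctx.Φunit.inv ▷ ctx.Φ.obj V) ≫
            (((ctx.Φ.map (η_ V Vᘁ)) ▷ ctx.Φ.obj V) ≫ ctx.J (V ⊗ Vᘁ) V) ≫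
              ctx.Φ.map ((α_ V Vᘁ V).hom ≫ (V ◁ ε_ V Vᘁ) ≫ (ρ_ V).hom) := by
          simp only [Category.assoc]
      _ = (λ_ (ctx.Φ.obj V)).inv ≫ (ctx.Φunit.inv ▷ ctx.Φ.obj V) ≫
            ctx.J (𝟙_ (FDRep ℂ G)) V ≫ (ctx.Φ.map ((η_ V Vᘁ) ⊗ₘ 𝟙 V) ≫
              ctx.Φ.map ((α_ V Vᘁ V).hom ≫ (V ◁ ε_ V Vᘁ) ≫ (ρ_ V).hom)) := by
          rw [hn]
          simp only [Category.assoc]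
      _ = (λ_ (ctx.Φ.obj V)).inv ≫ (ctx.Φunit.inv ▷ ctx.Φ.obj V) ≫
            ctx.J (𝟙_ (FDRep ℂ G)) V ≫ ctx.Φ.map (λ_ V).hom := by rw [hP]
      _ = (λ_ (ctx.Φ.obj V)).inv ≫ (λ_ (ctx.Φ.obj V)).hom := by
          rw [← ctx.J_unit_left V]
      _ = 𝟙 (ctx.Φ.obj V) := by simp
  have hG1 : (λ_ (ctx.Φ.obj V)).inv ≫
        ((itld ≫ ctx.J V Vᘁ) ▷ ctx.Φ.obj V) ≫ ctx.J (V ⊗ Vᘁ) V ≫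
          ctx.Φ.map ((α_ V Vᘁ V).hom ≫ (V ◁ ε_ V Vᘁ) ≫ (ρ_ V).hom) = 𝟙 (ctx.Φ.obj V) := by
    rw [comp_whiskerRight]
    have hn : ctx.J V (Vᘁ ⊗ V) ≫ ctx.Φ.map (V ◁ ε_ V Vᘁ)
        = (ctx.Φ.obj V ◁ ctx.Φ.map (ε_ V Vᘁ)) ≫ ctx.J V (𝟙_ (FDRep ℂ G)) := by
      have hnat := ctx.J_nat (𝟙 V) (ε_ V Vᘁ)
      rw [CategoryTheory.Functor.map_id] at hnat
      rw [id_tensorHom, id_tensorHom] at hnat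
      exact hnat.symm
    have hkey0 : ctx.J Vᘁ V ≫ ctx.Φ.map (ε_ V Vᘁ) = ctx.etilde V ≫ ctx.Φunit.inv := by
      show _ = (ctx.J Vᘁ V ≫ ctx.Φ.map (ε_ V Vᘁ) ≫ ctx.Φunit.hom) ≫ ctx.Φunit.inv
      simp
    have hkey : (ctx.Φ.obj V ◁ ctx.J Vᘁ V) ≫ (ctx.Φ.obj V ◁ ctx.Φ.map (ε_ V Vᘁ))
        = (ctx.Φ.obj V ◁ ctx.etilde V) ≫ (ctx.Φ.obj V ◁ ctx.Φunit.inv) := by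
      rw [← MonoidalCategory.whiskerLeft_comp, ← MonoidalCategory.whiskerLeft_comp, hkey0]
    have hJP : (ctx.J V Vᘁ ▷ ctx.Φ.obj V) ≫ ctx.J (V ⊗ Vᘁ) V ≫
          ctx.Φ.map ((α_ V Vᘁ V).hom ≫ (V ◁ ε_ V Vᘁ) ≫ (ρ_ V).hom)
        = (α_ (ctx.Φ.obj V) (ctx.Φ.obj Vᘁ) (ctx.Φ.obj V)).hom ≫
            (ctx.Φ.obj V ◁ ctx.etilde V) ≫ (ρ_ (ctx.Φ.obj V)).hom := by
      calc (ctx.J V Vᘁ ▷ ctx.Φ.obj V) ≫ ctx.J (V ⊗ Vᘁ) V ≫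
            ctx.Φ.map ((α_ V Vᘁ V).hom ≫ (V ◁ ε_ V Vᘁ) ≫ (ρ_ V).hom)
          = ((ctx.J V Vᘁ ▷ ctx.Φ.obj V) ≫ ctx.J (V ⊗ Vᘁ) V) ≫
              ctx.Φ.map ((α_ V Vᘁ V).hom ≫ (V ◁ ε_ V Vᘁ) ≫ (ρ_ V).hom) := by
            simp only [Category.assoc]
        _ = (α_ (ctx.Φ.obj V) (ctx.Φ.obj Vᘁ) (ctx.Φ.obj V)).hom ≫
              (ctx.Φ.obj V ◁ ctx.J Vᘁ V) ≫ ctx.J V (Vᘁ ⊗ V) ≫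
                (ctx.Φ.map (α_ V Vᘁ V).inv ≫
                  ctx.Φ.map ((α_ V Vᘁ V).hom ≫ (V ◁ ε_ V Vᘁ) ≫ (ρ_ V).hom)) := by
            rw [ctx.J_assoc V Vᘁ V]; simp only [Category.assoc]
        _ = (α_ (ctx.Φ.obj V) (ctx.Φ.obj Vᘁ) (ctx.Φ.obj V)).hom ≫
              (ctx.Φ.obj V ◁ ctx.J Vᘁ V) ≫ ctx.J V (Vᘁ ⊗ V) ≫
                (ctx.Φ.map (V ◁ ε_ V Vᘁ) ≫ ctx.Φ.map (ρ_ V).hom) := by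
            rw [← ctx.Φ.map_comp, ← ctx.Φ.map_comp, Iso.inv_hom_id_assoc]
        _ = (α_ (ctx.Φ.obj V) (ctx.Φ.obj Vᘁ) (ctx.Φ.obj V)).hom ≫
              ((ctx.Φ.obj V ◁ ctx.J Vᘁ V) ≫ (ctx.Φ.obj V ◁ ctx.Φ.map (ε_ V Vᘁ))) ≫
                ctx.J V (𝟙_ (FDRep ℂ G)) ≫ ctx.Φ.map (ρ_ V).hom := by
            rw [← Category.assoc (ctx.J V (Vᘁ ⊗ V)), hn]
            simp only [Category.assoc]
        _ = (α_ (ctx.Φ.obj V) (ctx.Φ.obj Vᘁ) (ctx.Φ.obj V)).hom ≫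
              (ctx.Φ.obj V ◁ ctx.etilde V) ≫
                ((ctx.Φ.obj V ◁ ctx.Φunit.inv) ≫
                  ctx.J V (𝟙_ (FDRep ℂ G)) ≫ ctx.Φ.map (ρ_ V).hom) := by
            rw [hkey]; simp only [Category.assoc]
        _ = (α_ (ctx.Φ.obj V) (ctx.Φ.obj Vᘁ) (ctx.Φ.obj V)).hom ≫
              (ctx.Φ.obj V ◁ ctx.etilde V) ≫ (ρ_ (ctx.Φ.obj V)).hom := by
            rw [ctx.J_unit_right V]
    calc (λ_ (ctx.Φ.obj V)).inv ≫
          ((itld ▷ ctx.Φ.obj V) ≫ (ctx.J V Vᘁ ▷ ctx.Φ.obj V)) ≫ ctx.J (V ⊗ Vᘁ) V ≫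
            ctx.Φ.map ((α_ V Vᘁ V).hom ≫ (V ◁ ε_ V Vᘁ) ≫ (ρ_ V).hom)
        = (λ_ (ctx.Φ.obj V)).inv ≫ (itld ▷ ctx.Φ.obj V) ≫
            ((ctx.J V Vᘁ ▷ ctx.Φ.obj V) ≫ ctx.J (V ⊗ Vᘁ) V ≫
              ctx.Φ.map ((α_ V Vᘁ V).hom ≫ (V ◁ ε_ V Vᘁ) ≫ (ρ_ V).hom)) := by
          simp only [Category.assoc]
      _ = (λ_ (ctx.Φ.obj V)).inv ≫ (itld ▷ ctx.Φ.obj V) ≫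
            (α_ (ctx.Φ.obj V) (ctx.Φ.obj Vᘁ) (ctx.Φ.obj V)).hom ≫
              (ctx.Φ.obj V ◁ ctx.etilde V) ≫ (ρ_ (ctx.Φ.obj V)).hom := by rw [hJP]
      _ = (λ_ (ctx.Φ.obj V)).inv ≫
            ((itld ▷ ctx.Φ.obj V) ≫
              (α_ (ctx.Φ.obj V) (ctx.Φ.obj Vᘁ) (ctx.Φ.obj V)).hom ≫
                (ctx.Φ.obj V ◁ ctx.etilde V)) ≫ (ρ_ (ctx.Φ.obj V)).hom := by
          simp only [Category.assoc]
      _ = (λ_ (ctx.Φ.obj V)).inv ≫ ((λ_ (ctx.Φ.obj V)).hom ≫ (ρ_ (ctx.Φ.obj V)).inv) ≫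
            (ρ_ (ctx.Φ.obj V)).hom := by rw [zig₂]
      _ = 𝟙 (ctx.Φ.obj V) := by simp
  have h1 : 𝟙 (ctx.Φ.obj V) = (c₁ * c₂⁻¹) • 𝟙 (ctx.Φ.obj V) := by
    calc 𝟙 (ctx.Φ.obj V)
        = (λ_ (ctx.Φ.obj V)).inv ≫
            ((itld ≫ ctx.J V Vᘁ) ▷ ctx.Φ.obj V) ≫ ctx.J (V ⊗ Vᘁ) V ≫
              ctx.Φ.map ((α_ V Vᘁ V).hom ≫ (V ◁ ε_ V Vᘁ) ≫ (ρ_ V).hom) := hG1.symm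
      _ = (λ_ (ctx.Φ.obj V)).inv ≫
            (((c₁ * c₂⁻¹) • (ctx.Φunit.inv ≫ ctx.Φ.map (η_ V Vᘁ))) ▷ ctx.Φ.obj V) ≫
              ctx.J (V ⊗ Vᘁ) V ≫
                ctx.Φ.map ((α_ V Vᘁ V).hom ≫ (V ◁ ε_ V Vᘁ) ≫ (ρ_ V).hom) := by rw [hi]
      _ = (c₁ * c₂⁻¹) • ((λ_ (ctx.Φ.obj V)).inv ≫
            ((ctx.Φunit.inv ≫ ctx.Φ.map (η_ V Vᘁ)) ▷ ctx.Φ.obj V) ≫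
              ctx.J (V ⊗ Vᘁ) V ≫
                ctx.Φ.map ((α_ V Vᘁ V).hom ≫ (V ◁ ε_ V Vᘁ) ≫ (ρ_ V).hom)) := by
          rw [MonoidalLinear.smul_whiskerRight]
          simp only [CategoryTheory.Linear.smul_comp, CategoryTheory.Linear.comp_smul]
      _ = (c₁ * c₂⁻¹) • 𝟙 (ctx.Φ.obj V) := by rw [hG2]
  have hc1 : c₁ * c₂⁻¹ = 1 := by
    by_contra hne
    have hsub : (c₁ * c₂⁻¹ - 1) • 𝟙 (ctx.Φ.obj V) = 0 := by
      rw [sub_smul, one_smul, ← h1, sub_self]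
    have hid0 : 𝟙 (ctx.Φ.obj V) = 0 := by
      have h' := congrArg (fun t => (c₁ * c₂⁻¹ - 1)⁻¹ • t) hsub
      simpa [smul_smul, inv_mul_cancel₀ (sub_ne_zero.mpr hne)] using h'
    exact hnz ((Limits.IsZero.iff_id_eq_zero (ctx.Φ.obj V)).mpr hid0)
  rw [hc1, one_smul] at hi
  exact hi
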